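/- Let ρ ∈ (0,1) and W, Q be probability measures with D_ρ(W‖Q) < ∞, and let W_ρ^Q be the order-ρ tilted probability measure. Let W_ac denote the component of W absolutely continuous with respect to Q. Then W_ρ^Q-almost surely, ln(dW_ρ^Q/dQ) − D_1(W_ρ^Q‖Q) = ρ(ln(dW_ac/dQ) − E_{W_ρ^Q}[ln(dW_ac/dQ)]). -/

import Mathlib

open MeasureTheory Real
open scoped ENNReal

/-- Integrand of the order-`ρ` Rényi divergence with respect to a dominating measure `ν`. -/
noncomputable def renyiIntegrand {Y : Type*} [MeasurableSpace Y] (ρ : ℝ) (W Q ν : Measure Y)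
    (y : Y) : ℝ :=
  ((W.rnDeriv ν y).toReal) ^ ρ * ((Q.rnDeriv ν y).toReal) ^ (1 - ρ)

/-- Order-`ρ` Rényi divergence `D_ρ(W‖Q)` computed via a dominating measure `ν`. -/
noncomputable def renyiDiv {Y : Type*} [MeasurableSpace Y] (ρ : ℝ) (W Q ν : Measure Y) : ℝ :=
  (ρ - 1)⁻¹ * Real.log (∫ y, renyiIntegrand ρ W Q ν y ∂ν)

/-- Kullback-Leibler divergence `D_1(μ‖ν) = ∫ log (dμ/dν) dμ` (real-valued version). -/
noncomputable def klDiv' {Y : Type*} [MeasurableSpace Y] (μ ν : Measure Y) : ℝ :=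
  ∫ y, Real.log ((μ.rnDeriv ν y).toReal) ∂μ

/-- Order-`ρ` tilted probability measure `W_ρ^Q`:
`dW_ρ^Q/dν = e^{(1-ρ) D_ρ(W‖Q)} (dW/dν)^ρ (dQ/dν)^{1-ρ}`. -/
noncomputable def tilted {Y : Type*} [MeasurableSpace Y] (ρ : ℝ) (W Q ν : Measure Y) :
    Measure Y :=
  ν.withDensity fun y =>
    ENNReal.ofReal (Real.exp ((1 - ρ) * renyiDiv ρ W Q ν) * renyiIntegrand ρ W Q ν y)

/-- For `ρ ∈ (0,1)` and probability measures `W, Q` with finite `D_ρ(W‖Q)`,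
`W_ρ^Q`-a.s. `ln(dW_ρ^Q/dQ) − D_1(W_ρ^Q‖Q) = ρ (ln(dW_ac/dQ) − E_{W_ρ^Q}[ln(dW_ac/dQ)])`,
where `dW_ac/dQ` is the Radon-Nikodym derivative of the absolutely continuous component. -/
lemma aux_rpow_mul_abs_log_le {ρ u : ℝ} (hρ0 : 0 < ρ) (hρ1 : ρ < 1) (hu : 0 ≤ u) :
    u ^ ρ * |Real.log u| ≤ 1/ρ + u/(1-ρ) := by
  have h1ρ : 0 < 1 - ρ := by linarith
  rcases eq_or_lt_of_le hu with h0 | h0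
  · rw [← h0, Real.zero_rpow hρ0.ne', zero_mul]
    positivity
  rcases le_or_gt u 1 with h1 | h1
  · have hlog : Real.log u ≤ 0 := Real.log_nonpos hu h1
    have habs : |Real.log u| = Real.log u⁻¹ := by
      rw [Real.log_inv, abs_of_nonpos hlog]
    have hiu : (0:ℝ) < u⁻¹ := by positivity
    have key : Real.log u⁻¹ = ρ⁻¹ * Real.log (u⁻¹ ^ ρ) := by
      rw [Real.log_rpow hiu]; field_simp
    have hle : Real.log (u⁻¹ ^ ρ) ≤ u⁻¹ ^ ρ := Real.log_le_self (by positivity)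
    have hpos : (0:ℝ) < u ^ ρ := Real.rpow_pos_of_pos h0 _
    have : u ^ ρ * |Real.log u| ≤ u ^ ρ * (ρ⁻¹ * (u⁻¹ ^ ρ)) := by
      rw [habs, key]
      exact mul_le_mul_of_nonneg_left (mul_le_mul_of_nonneg_left hle (by positivity)) hpos.le
    have hinv : u⁻¹ ^ ρ = (u ^ ρ)⁻¹ := Real.inv_rpow hu ρ
    have : u ^ ρ * |Real.log u| ≤ ρ⁻¹ := by
      calc u ^ ρ * |Real.log u| ≤ u ^ ρ * (ρ⁻¹ * (u⁻¹ ^ ρ)) := this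
        _ = ρ⁻¹ := by rw [hinv]; field_simp
    have : u ^ ρ * |Real.log u| ≤ 1/ρ := by rw [one_div]; exact this
    have hnn : 0 ≤ u/(1-ρ) := by positivity
    linarith
  · have hlog : 0 ≤ Real.log u := Real.log_nonneg h1.le
    have habs : |Real.log u| = Real.log u := abs_of_nonneg hlog
    have key : Real.log u = (1-ρ)⁻¹ * Real.log (u ^ (1-ρ)) := by
      rw [Real.log_rpow (by linarith)]; field_simp
    have hle : Real.log (u ^ (1-ρ)) ≤ u ^ (1-ρ) := Real.log_le_self (by positivity)
    have hpos : (0:ℝ) < u ^ ρ := Real.rpow_pos_of_pos h0 _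
    have hmul : u ^ ρ * u ^ (1-ρ) = u := by
      rw [← Real.rpow_add h0]; norm_num
    have : u ^ ρ * |Real.log u| ≤ u ^ ρ * ((1-ρ)⁻¹ * u ^ (1-ρ)) := by
      rw [habs, key]
      exact mul_le_mul_of_nonneg_left (mul_le_mul_of_nonneg_left hle (by positivity)) hpos.le
    have h2 : u ^ ρ * ((1-ρ)⁻¹ * u ^ (1-ρ)) = u / (1-ρ) := by
      rw [mul_comm ((1-ρ)⁻¹) _, ← mul_assoc, hmul, div_eq_mul_inv]
    have hnn : 0 ≤ 1/ρ := by positivity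
    linarith [this, h2 ▸ this]

theorem tilted_log_density_Q {Y : Type*} [MeasurableSpace Y] (ρ : ℝ)
    (hρ : ρ ∈ Set.Ioo (0 : ℝ) 1) (W Q ν : Measure Y)
    [IsProbabilityMeasure W] [IsProbabilityMeasure Q] [SigmaFinite ν]
    (hW : W ≪ ν) (hQ : Q ≪ ν)
    (hfin : 0 < ∫ y, renyiIntegrand ρ W Q ν y ∂ν) :
    ∀ᵐ y ∂(tilted ρ W Q ν),
      Real.log (((tilted ρ W Q ν).rnDeriv Q y).toReal) - klDiv' (tilted ρ W Q ν) Q =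
        ρ * (Real.log ((W.rnDeriv Q y).toReal) -
          ∫ z, Real.log ((W.rnDeriv Q z).toReal) ∂(tilted ρ W Q ν)) := by
  obtain ⟨hρ0, hρ1⟩ := hρ
  have h1ρ : (0:ℝ) < 1 - ρ := by linarith
  set c : ℝ := (1 - ρ) * renyiDiv ρ W Q ν with hc
  set I : Y → ℝ := renyiIntegrand ρ W Q ν with hI
  set T : Measure Y := tilted ρ W Q ν with hT
  -- measurability
  have hImeas : Measurable I := by
    apply Measurable.mul
    · exact (Measure.measurable_rnDeriv W ν).ennreal_toReal.pow_const ρ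
    · exact (Measure.measurable_rnDeriv Q ν).ennreal_toReal.pow_const (1-ρ)
  have hInn : ∀ y, 0 ≤ I y := by
    intro y
    apply mul_nonneg <;> exact Real.rpow_nonneg ENNReal.toReal_nonneg _
  have hkmeas : Measurable fun y => ENNReal.ofReal (Real.exp c * I y) :=
    (measurable_const.mul hImeas).ennreal_ofReal
  -- the density of T with respect to Q
  set m : Y → ℝ≥0∞ := fun y =>
    ENNReal.ofReal (Real.exp c * ((W.rnDeriv ν y).toReal) ^ ρ *
      ((Q.rnDeriv ν y).toReal) ^ (-ρ)) with hm
  have hmmeas : Measurable m := by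
    apply Measurable.ennreal_ofReal
    exact (measurable_const.mul ((Measure.measurable_rnDeriv W ν).ennreal_toReal.pow_const ρ)).mul
      ((Measure.measurable_rnDeriv Q ν).ennreal_toReal.pow_const (-ρ))
  have hTm : T = Q.withDensity m := by
    rw [hT, tilted]
    conv_rhs => rw [← Measure.withDensity_rnDeriv_eq Q ν hQ]
    rw [← withDensity_mul _ (Measure.measurable_rnDeriv Q ν) hmmeas]
    apply withDensity_congr_ae
    filter_upwards [Measure.rnDeriv_lt_top Q ν] with y hy
    set g : ℝ := (Q.rnDeriv ν y).toReal with hg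
    have hgnn : 0 ≤ g := ENNReal.toReal_nonneg
    have h1 : Q.rnDeriv ν y = ENNReal.ofReal g := by
      rw [hg, ENNReal.ofReal_toReal hy.ne]
    rw [Pi.mul_apply, h1, ← ENNReal.ofReal_mul hgnn]
    congr 1
    rcases eq_or_lt_of_le hgnn with h0 | h0
    · rw [renyiIntegrand, ← hg, ← h0, Real.zero_rpow h1ρ.ne', Real.zero_rpow (by simpa using hρ0.ne'),
        mul_zero, mul_zero, mul_zero, mul_zero]
    · rw [renyiIntegrand, ← hg]
      have : g ^ (1-ρ) = g * g ^ (-ρ) := by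
        rw [show (1:ℝ)-ρ = 1 + (-ρ) by ring, Real.rpow_add h0, Real.rpow_one]
      rw [this]; ring
  have hTQ : T ≪ Q := hTm ▸ withDensity_absolutelyContinuous Q m
  have hTν : T ≪ ν := hT ▸ withDensity_absolutelyContinuous ν _
  have hrnTQ : T.rnDeriv Q =ᵐ[Q] m := by
    rw [hTm]; exact Measure.rnDeriv_withDensity Q hmmeas
  -- chain rule fact a.e. Q
  have hK : W.rnDeriv ν =ᵐ[Q] fun y => W.rnDeriv Q y * Q.rnDeriv ν y := by
    have hadd : W.rnDeriv ν =ᵐ[ν]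
        (W.singularPart Q).rnDeriv ν + (Q.withDensity (W.rnDeriv Q)).rnDeriv ν := by
      conv_lhs => rw [Measure.haveLebesgueDecomposition_add W Q]
      exact Measure.rnDeriv_add' _ _ _
    have hsing : (W.singularPart Q).rnDeriv ν =ᵐ[Q] 0 :=
      Measure.rnDeriv_eq_zero_of_mutuallySingular (Measure.mutuallySingular_singularPart W Q) hQ
    have hwd : (Q.withDensity (W.rnDeriv Q)).rnDeriv ν =ᵐ[ν]
        fun y => W.rnDeriv Q y * Q.rnDeriv ν y :=
      Measure.rnDeriv_withDensity_left_of_absolutelyContinuous hQ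
        (Measure.measurable_rnDeriv W Q).aemeasurable
    filter_upwards [hQ.ae_le hadd, hsing, hQ.ae_le hwd] with y h1 h2 h3
    rw [h1, Pi.add_apply, h2, Pi.zero_apply, zero_add, h3]
  have hgpos : ∀ᵐ y ∂Q, 0 < Q.rnDeriv ν y := Measure.rnDeriv_pos hQ
  have hglt : ∀ᵐ y ∂Q, Q.rnDeriv ν y < ⊤ := hQ.ae_le (Measure.rnDeriv_lt_top Q ν)
  -- the density m computed a.e. Q
  have hmQ : ∀ᵐ y ∂Q, (m y).toReal = Real.exp c * ((W.rnDeriv Q y).toReal) ^ ρ ∧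
      (W.rnDeriv ν y).toReal = (W.rnDeriv Q y).toReal * (Q.rnDeriv ν y).toReal ∧
      0 < (Q.rnDeriv ν y).toReal := by
    filter_upwards [hK, hgpos, hglt] with y h1 h2 h3
    set u : ℝ := (W.rnDeriv Q y).toReal with hu
    set g : ℝ := (Q.rnDeriv ν y).toReal with hg
    have hgr : 0 < g := ENNReal.toReal_pos h2.ne' h3.ne
    have hfr : (W.rnDeriv ν y).toReal = u * g := by rw [h1, ENNReal.toReal_mul]
    have hunn : 0 ≤ u := ENNReal.toReal_nonneg
    refine ⟨?_, hfr, hgr⟩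
    rw [hm]
    rw [ENNReal.toReal_ofReal (by positivity), hfr,
      Real.mul_rpow hunn hgr.le]
    have hgg : g ^ ρ * g ^ (-ρ) = 1 := by
      rw [← Real.rpow_add hgr]; norm_num
    linear_combination (Real.exp c * u ^ ρ) * hgg
  -- positivity a.e. T
  have hpos : ∀ᵐ y ∂T, 0 < Real.exp c * I y := by
    have hs : MeasurableSet {y | Real.exp c * I y ≤ 0} :=
      measurableSet_le (measurable_const.mul hImeas) measurable_const
    have hT0 : T {y | Real.exp c * I y ≤ 0} = 0 := by
      rw [hT, tilted, withDensity_apply _ hs]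
      have : ∫⁻ y in {y | Real.exp c * I y ≤ 0},
          ENNReal.ofReal (Real.exp c * I y) ∂ν = 0 := by
        rw [setLIntegral_congr_fun hs (fun ⦃y⦄ (hy : Real.exp c * I y ≤ 0) =>
          show ENNReal.ofReal (Real.exp c * I y) = (fun _ => (0:ℝ≥0∞)) y from
            ENNReal.ofReal_eq_zero.mpr hy), lintegral_zero]
      exact this
    rw [ae_iff]
    convert hT0 using 2
    ext y
    simp [not_lt]
  -- the main pointwise identity a.e. T
  set L : Y → ℝ := fun y => Real.log ((W.rnDeriv Q y).toReal) with hL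
  have hA : ∀ᵐ y ∂T, Real.log ((T.rnDeriv Q y).toReal) = c + ρ * L y := by
    filter_upwards [hTQ.ae_le hrnTQ, hTQ.ae_le hmQ, hpos] with y h1 ⟨h2, h3, h4⟩ h5
    set u : ℝ := (W.rnDeriv Q y).toReal with hu
    set g : ℝ := (Q.rnDeriv ν y).toReal with hg
    have hIpos : 0 < I y := by
      by_contra hcon
      push_neg at hcon
      nlinarith [Real.exp_pos c, hInn y]
    have hfrpos : 0 < (W.rnDeriv ν y).toReal := by
      by_contra hcon
      push_neg at hcon
      have h0 : (W.rnDeriv ν y).toReal = 0 := le_antisymm hcon ENNReal.toReal_nonneg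
      have : I y = 0 := by
        rw [hI]; simp only [renyiIntegrand]
        rw [h0, Real.zero_rpow hρ0.ne', zero_mul]
      rw [this] at hIpos; exact lt_irrefl _ hIpos
    have hfr2 : 0 < u * g := h3 ▸ hfrpos
    have hupos : 0 < u := by
      by_contra hcon
      push_neg at hcon
      nlinarith [h4, hfr2]
    rw [h1, h2, hL]
    rw [Real.log_mul (Real.exp_pos c).ne' (Real.rpow_pos_of_pos hupos ρ).ne',
      Real.log_exp, Real.log_rpow hupos]
  -- integrability of L with respect to T
  have hLmeas : Measurable L := Real.measurable_log.comp (Measure.measurable_rnDeriv W Q).ennreal_toReal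
  have hLint : Integrable L T := by
    rw [hTm, integrable_withDensity_iff hmmeas (ae_of_all _ fun y => ENNReal.ofReal_lt_top)]
    have hmaj : Integrable (fun y => Real.exp c *
        (1/ρ + (W.rnDeriv Q y).toReal / (1-ρ))) Q := by
      exact ((integrable_const (1/ρ)).add
        ((Measure.integrable_toReal_rnDeriv).div_const (1-ρ))).const_mul _
    refine Integrable.mono' hmaj
      ((hLmeas.mul hmmeas.ennreal_toReal).aestronglyMeasurable) ?_
    filter_upwards [hmQ] with y ⟨h2, _, _⟩
    set u : ℝ := (W.rnDeriv Q y).toReal with hu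
    have hunn : 0 ≤ u := ENNReal.toReal_nonneg
    rw [Real.norm_eq_abs, abs_mul, h2, abs_of_nonneg (by positivity : (0:ℝ) ≤ Real.exp c * u ^ ρ)]
    calc |L y| * (Real.exp c * u ^ ρ) = Real.exp c * (u ^ ρ * |L y|) := by ring
      _ ≤ Real.exp c * (1/ρ + u/(1-ρ)) := by
          refine mul_le_mul_of_nonneg_left ?_ (Real.exp_pos c).le
          exact aux_rpow_mul_abs_log_le hρ0 hρ1 hunn
  -- T is a probability measure
  have hIint : Integrable I ν := by
    have hmaj : Integrable (fun y => ρ * (W.rnDeriv ν y).toReal +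
        (1-ρ) * (Q.rnDeriv ν y).toReal) ν :=
      (Measure.integrable_toReal_rnDeriv.const_mul ρ).add
        (Measure.integrable_toReal_rnDeriv.const_mul (1-ρ))
    refine Integrable.mono' hmaj hImeas.aestronglyMeasurable (ae_of_all _ fun y => ?_)
    rw [Real.norm_eq_abs, abs_of_nonneg (hInn y)]
    exact Real.geom_mean_le_arith_mean2_weighted hρ0.le h1ρ.le
      ENNReal.toReal_nonneg ENNReal.toReal_nonneg (by ring)
  have hTprob : IsProbabilityMeasure T := by
    constructor
    rw [hT, tilted, withDensity_apply _ MeasurableSet.univ, setLIntegral_univ]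
    rw [← ofReal_integral_eq_lintegral_ofReal (hIint.const_mul _)
      (ae_of_all _ fun y => mul_nonneg (Real.exp_pos c).le (hInn y))]
    rw [integral_const_mul]
    have hX : Real.exp c * ∫ y, I y ∂ν = 1 := by
      have hcX : c = - Real.log (∫ y, I y ∂ν) := by
        rw [hc, renyiDiv, ← hI]
        have hne : ρ - (1:ℝ) ≠ 0 := sub_ne_zero.mpr hρ1.ne
        field_simp
        ring
      rw [hcX, Real.exp_neg, Real.exp_log hfin, inv_mul_cancel₀ hfin.ne']
    rw [hX, ENNReal.ofReal_one]
  -- compute klDiv'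
  have hkl : klDiv' T Q = c + ρ * ∫ z, L z ∂T := by
    rw [klDiv', integral_congr_ae hA,
      integral_add (integrable_const c) (hLint.const_mul ρ), integral_const,
      probReal_univ, one_smul, integral_const_mul]
  filter_upwards [hA] with y hy
  rw [hy, hkl]
  ring
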